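/- arXiv:1707.05819 — 2 statements merged into one kernel-verified Lean document; each statement's English description precedes it below -/
import Mathlib

section
/- If e ∈ N is primitive, then for any field k the quotient ring k[N]/(1 + z^e) is an integral domain; consequently 1 + z^e generates a prime ideal of the Laurent polynomial group algebra k[N]. -/
open AddMonoidAlgebra

set_option maxHeartbeats 1000000 in
/-- If `e ∈ N` is primitive, then for any field `k` the quotient
`k[N]/(1 + z^e)` is an integral domain; consequently `1 + z^e` generates a
prime ideal of the Laurent polynomial group algebra `k[N]`. -/
theorem one_add_ze_prime
    (k : Type*) [Field k]
    {N : Type*} [AddCommGroup N] [Module ℤ N] [Module.Free ℤ N] [Module.Finite ℤ N]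
    (e : N) (hprim : ∃ f : Module.Dual ℤ N, f e = 1) :
    IsDomain (AddMonoidAlgebra k N ⧸
        Ideal.span {(1 + AddMonoidAlgebra.single e (1 : k) : AddMonoidAlgebra k N)}) ∧
    (Ideal.span {(1 + AddMonoidAlgebra.single e (1 : k) : AddMonoidAlgebra k N)}).IsPrime := by
  obtain ⟨f, hf⟩ := hprim
  set I : Ideal (AddMonoidAlgebra k N) :=
    Ideal.span {(1 + AddMonoidAlgebra.single e (1 : k) : AddMonoidAlgebra k N)} with hI
  set K := LinearMap.ker f with hK
  have hmem : ∀ n : N, n - f n • e ∈ K := by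
    intro n
    simp [hK, LinearMap.mem_ker, map_sub, map_zsmul, hf, mul_one]
  have hne : (-1 : k) ≠ 0 := by norm_num
  let ψ0 : Multiplicative N →* AddMonoidAlgebra k ↥K :=
    { toFun := fun n => ((-1 : k) ^ (f n.toAdd)) •
        AddMonoidAlgebra.single (⟨n.toAdd - f n.toAdd • e, hmem _⟩ : ↥K) (1 : k)
      map_one' := by
        show ((-1 : k) ^ (f (0:N))) •
          AddMonoidAlgebra.single (⟨(0:N) - f (0:N) • e, hmem 0⟩ : ↥K) (1 : k) = 1
        have h0 : (⟨(0:N) - f (0:N) • e, hmem 0⟩ : ↥K) = 0 := Subtype.ext (by simp)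
        rw [h0, map_zero, zpow_zero, one_smul, ← AddMonoidAlgebra.one_def]
      map_mul' := by
        intro a b
        show ((-1 : k) ^ (f (a.toAdd + b.toAdd))) •
          AddMonoidAlgebra.single
            (⟨a.toAdd + b.toAdd - f (a.toAdd + b.toAdd) • e, hmem _⟩ : ↥K) (1 : k)
          = (((-1 : k) ^ (f a.toAdd)) •
              AddMonoidAlgebra.single (⟨a.toAdd - f a.toAdd • e, hmem _⟩ : ↥K) (1 : k)) *
            (((-1 : k) ^ (f b.toAdd)) •
              AddMonoidAlgebra.single (⟨b.toAdd - f b.toAdd • e, hmem _⟩ : ↥K) (1 : k))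
        rw [smul_mul_smul_comm, AddMonoidAlgebra.single_mul_single, one_mul]
        rw [show (⟨a.toAdd + b.toAdd - f (a.toAdd + b.toAdd) • e, hmem _⟩ : ↥K)
            = (⟨a.toAdd - f a.toAdd • e, hmem _⟩ : ↥K)
              + (⟨b.toAdd - f b.toAdd • e, hmem _⟩ : ↥K) from Subtype.ext (by
            simp only [Submodule.coe_add, map_add, add_zsmul]
            abel)]
        rw [show ((-1 : k) ^ (f (a.toAdd + b.toAdd)))
            = ((-1 : k) ^ (f a.toAdd)) * ((-1 : k) ^ (f b.toAdd)) from by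
          rw [map_add, zpow_add₀ hne]] }
  let ψ : AddMonoidAlgebra k N →ₐ[k] AddMonoidAlgebra k ↥K :=
    AddMonoidAlgebra.lift k _ N ψ0
  have hψs : ∀ n : N, ψ (AddMonoidAlgebra.single n 1) =
      ((-1 : k) ^ (f n)) •
        AddMonoidAlgebra.single (⟨n - f n • e, hmem n⟩ : ↥K) (1 : k) := by
    intro n
    rw [AddMonoidAlgebra.lift_single, one_smul]
    rfl
  have hψe : ψ (AddMonoidAlgebra.single e 1) = -1 := by
    rw [hψs]
    have h0 : (⟨e - f e • e, hmem e⟩ : ↥K) = 0 :=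
      Subtype.ext (show e - f e • e = 0 by rw [hf, one_zsmul, sub_self])
    rw [h0, ← AddMonoidAlgebra.one_def, hf, zpow_one]
    simp
  have hψI : ∀ a ∈ I, ψ a = 0 := by
    intro a ha
    rw [hI, Ideal.mem_span_singleton] at ha
    obtain ⟨c, rfl⟩ := ha
    rw [map_mul]
    have h1 : ψ (1 + AddMonoidAlgebra.single e 1) = 0 := by
      rw [map_add, map_one, hψe]; ring
    rw [h1, zero_mul]
  let π := Ideal.Quotient.mkₐ k I
  let ψb := Ideal.Quotient.liftₐ I ψ hψI
  let ι0 : Multiplicative ↥K →* AddMonoidAlgebra k N :=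
    { toFun := fun x => AddMonoidAlgebra.single (x.toAdd : N) 1
      map_one' := by
        show AddMonoidAlgebra.single (((0 : ↥K) : N)) (1:k) = 1
        rw [ZeroMemClass.coe_zero, ← AddMonoidAlgebra.one_def]
      map_mul' := by
        intro a b
        show AddMonoidAlgebra.single ((a.toAdd + b.toAdd : ↥K) : N) (1:k)
          = AddMonoidAlgebra.single (a.toAdd : N) 1 * AddMonoidAlgebra.single (b.toAdd : N) 1
        rw [AddMonoidAlgebra.single_mul_single, one_mul, Submodule.coe_add] }
  let ι : AddMonoidAlgebra k ↥K →ₐ[k] AddMonoidAlgebra k N :=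
    AddMonoidAlgebra.lift k _ ↥K ι0
  have hιs : ∀ x : ↥K, ι (AddMonoidAlgebra.single x 1) =
      AddMonoidAlgebra.single (x : N) (1:k) := by
    intro x
    rw [AddMonoidAlgebra.lift_single, one_smul]
    rfl
  have hπe : π (AddMonoidAlgebra.single e 1) = -1 := by
    have h1 : π (1 + AddMonoidAlgebra.single e 1) = 0 := by
      rw [Ideal.Quotient.mkₐ_eq_mk, Ideal.Quotient.eq_zero_iff_mem]
      exact Ideal.subset_span rfl
    rw [map_add, map_one] at h1
    linear_combination h1
  have hπne : π (AddMonoidAlgebra.single (-e) 1) = -1 := by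
    have h1 : π (AddMonoidAlgebra.single e 1) * π (AddMonoidAlgebra.single (-e) 1) = 1 := by
      rw [← map_mul, AddMonoidAlgebra.single_mul_single, one_mul]
      rw [show e + -e = 0 from by abel, ← AddMonoidAlgebra.one_def, map_one]
    rw [hπe] at h1
    linear_combination -h1
  -- key: π (single (m • e) 1) = algebraMap k _ ((-1)^m)
  have hπme : ∀ m : ℤ, π (AddMonoidAlgebra.single (m • e) 1)
      = algebraMap k _ ((-1 : k) ^ m) := by
    intro m
    induction m using Int.induction_on with
    | zero => simp [← AddMonoidAlgebra.one_def]
    | succ m ih =>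
        have hs : AddMonoidAlgebra.single (((m : ℤ) + 1) • e) (1:k)
            = AddMonoidAlgebra.single ((m : ℤ) • e) 1 * AddMonoidAlgebra.single e 1 := by
          rw [AddMonoidAlgebra.single_mul_single, one_mul]
          congr 1
          rw [add_zsmul, one_zsmul]
        rw [hs, map_mul, ih, hπe, zpow_add_one₀ hne, map_mul, map_neg, map_one]
    | pred m ih =>
        have hs : AddMonoidAlgebra.single ((-(m : ℤ) - 1) • e) (1:k)
            = AddMonoidAlgebra.single ((-(m : ℤ)) • e) 1 * AddMonoidAlgebra.single (-e) 1 := by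
          rw [AddMonoidAlgebra.single_mul_single, one_mul]
          congr 1
          rw [sub_zsmul, one_zsmul]
        rw [hs, map_mul, ih, hπne, zpow_sub_one₀ hne,
          show ((-1:k))⁻¹ = -1 from by norm_num, map_mul, map_neg, map_one]
  -- the composite identity: π ∘ ι ∘ ψ = π
  have hkey : ∀ n : N, π (ι (ψ (AddMonoidAlgebra.single n 1)))
      = π (AddMonoidAlgebra.single n 1) := by
    intro n
    rw [hψs, map_smul, hιs, map_smul]
    have hsplit : AddMonoidAlgebra.single n (1:k)
        = AddMonoidAlgebra.single (n - f n • e) 1 * AddMonoidAlgebra.single (f n • e) 1 := by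
      rw [AddMonoidAlgebra.single_mul_single, one_mul]
      congr 1
      abel
    rw [hsplit, map_mul, hπme, mul_comm, ← Algebra.smul_def]
  have hgψ : ∀ x : AddMonoidAlgebra k N, π (ι (ψ x)) = π x := by
    intro x
    have : (π.comp ι).comp ψ = π := by
      apply AddMonoidAlgebra.algHom_ext
      intro a
      exact hkey a
      exact Subsingleton.elim _ _
    calc π (ι (ψ x)) = ((π.comp ι).comp ψ) x := rfl
      _ = π x := by rw [this]
  have hψb : ∀ y : AddMonoidAlgebra k N, ψb (π y) = ψ y := by
    intro y
    simp [ψb, π, Ideal.Quotient.liftₐ_apply, Ideal.Quotient.mkₐ_eq_mk]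
    rfl
  have hinj : Function.Injective ψb := by
    intro x y hxy
    obtain ⟨x, rfl⟩ := Ideal.Quotient.mkₐ_surjective k I x
    obtain ⟨y, rfl⟩ := Ideal.Quotient.mkₐ_surjective k I y
    rw [hψb, hψb] at hxy
    have := congrArg (fun z => π (ι z)) hxy
    simp only [hgψ] at this
    exact this
  -- domain structure on AddMonoidAlgebra k ↥K
  haveI : UniqueSums N := by
    have b := Module.Free.chooseBasis ℤ N
    exact UniqueSums.of_injective_addHom b.repr.toAddMonoidHom.toAddHom b.repr.injective inferInstance
  haveI : UniqueSums ↥K :=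
    UniqueSums.of_injective_addHom (AddMonoidHom.mk' (fun x : ↥K => (x : N)) (fun _ _ => rfl)).toAddHom
      Subtype.val_injective inferInstance
  haveI : NoZeroDivisors (AddMonoidAlgebra k ↥K) := inferInstance
  haveI : Nontrivial (AddMonoidAlgebra k N ⧸ I) := by
    refine nontrivial_of_ne 1 0 ?_
    intro h
    have h2 : ψb 1 = ψb 0 := by rw [h]
    rw [map_one, map_zero] at h2
    exact one_ne_zero h2
  haveI : NoZeroDivisors (AddMonoidAlgebra k N ⧸ I) := by
    constructor
    intro a b hab
    have : ψb (a * b) = 0 := by rw [hab, map_zero]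
    rw [map_mul] at this
    rcases mul_eq_zero.mp this with h | h
    · left; exact hinj (by rw [h, map_zero])
    · right; exact hinj (by rw [h, map_zero])
  haveI hdom : IsDomain (AddMonoidAlgebra k N ⧸ I) := NoZeroDivisors.to_isDomain _
  exact ⟨hdom, (Ideal.Quotient.isDomain_iff_prime I).mp hdom⟩
end

section
/- Mutation identity for sections over an unfrozen chart: for j ∈ I_uf and m ∈ M_I, applying the substitution z^n ↦ z^n(1+z^{e_j})^{−[n,e_j]} to the set { z^m z^n (1+z^{e_j})^k : n ∈ N, k ≥ −⟨e_j,m⟩ } and then the map z^m z^n ↦ z^{(m+p̄₁(n),n)}, z^{e_j}-terms via (1+z^{e_j}) ↦ (1+z^{(p̄₁(e_j),e_j)}), yields exactly the set { z^{(m+p̄₁(n),n)}(1+z^{(p̄₁(e_j),e_j)})^{−⟨e_j, m+p̄₁(n)⟩+ℓ} : n ∈ N, ℓ ≥ 0 }. -/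
/-- Mutation identity for sections over an unfrozen chart: applying
the mutation `z^n ↦ z^n(1+z^{e_j})^{−[n,e_j]}` to
`{ z^m z^n (1+z^{e_j})^k : n ∈ N, k ≥ −⟨e_j,m⟩ }` and then
`p̃₂^♯` (`z^m z^n ↦ z^{(m+p̄₁(n),n)}`, `1+z^{e_j} ↦ 1+z^{(p̄₁(e_j),e_j)}`) yields
exactly `{ z^{(m+p̄₁(n),n)}(1+z^{(p̄₁(e_j),e_j)})^{−⟨e_j, m+p̄₁(n)⟩+ℓ} : n ∈ N, ℓ ≥ 0 }`
(as subsets of the fraction field of `k[M_I ⊕ N]`). -/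
theorem unfrozen_chart_mutation_sets
    (k : Type*) [Field k]
    {N : Type*} [AddCommGroup N] [Module ℤ N] [Module.Free ℤ N] [Module.Finite ℤ N]
    (B : N →ₗ[ℤ] N →ₗ[ℤ] ℤ) (NI : Submodule ℤ N)
    {I : Type*} [Fintype I] (b : Module.Basis I ℤ ↥NI)
    (j : I) (hj : B ((b j : N)) ((b j : N)) = 0) (m : Module.Dual ℤ ↥NI)
    (K : Type*) [Field K] [Algebra (AddMonoidAlgebra k (Module.Dual ℤ ↥NI × N)) K]
    [IsFractionRing (AddMonoidAlgebra k (Module.Dual ℤ ↥NI × N)) K] :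
    let A := AddMonoidAlgebra k (Module.Dual ℤ ↥NI × N)
    let p1bar : N →ₗ[ℤ] Module.Dual ℤ ↥NI :=
      ∑ i : I, (B.flip ((b i : N))).smulRight (b.coord i)
    let Z : Module.Dual ℤ ↥NI × N → K :=
      fun q => algebraMap A K (AddMonoidAlgebra.single q (1 : k))
    let g : Module.Dual ℤ ↥NI × N := (p1bar (b j : N), (b j : N))
    {x : K | ∃ (n : N) (t : ℤ), t ≥ -(m (b j)) ∧
        x = Z (m + p1bar n, n) * (1 + Z g) ^ (-(B n ((b j : N))) + t)} =
      {x : K | ∃ (n : N) (l : ℤ), l ≥ 0 ∧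
        x = Z (m + p1bar n, n) * (1 + Z g) ^ (-((m + p1bar n) (b j)) + l)} := by
  intro A p1bar Z g
  have key : ∀ n : N, (p1bar n) (b j) = B n ((b j : N)) := by
    intro n
    simp only [p1bar, LinearMap.coe_sum, Finset.sum_apply, LinearMap.smulRight_apply,
      LinearMap.flip_apply, LinearMap.smul_apply, Module.Basis.coord_apply, Module.Basis.repr_self,
      smul_eq_mul]
    rw [Finset.sum_eq_single j]
    · simp
    · intro i _ hi; simp [Finsupp.single_apply, Ne.symm hi]
    · simp

  ext x
  simp only [Set.mem_setOf_eq]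
  constructor
  · rintro ⟨n, t, ht, rfl⟩
    refine ⟨n, t + m (b j), by linarith, ?_⟩
    congr 1
    have : (m + p1bar n) (b j) = m (b j) + B n ((b j : N)) := by
      simp [LinearMap.add_apply, key n]
    rw [this]; ring
  · rintro ⟨n, l, hl, rfl⟩
    refine ⟨n, l - m (b j), by linarith, ?_⟩
    congr 1
    have : (m + p1bar n) (b j) = m (b j) + B n ((b j : N)) := by
      simp [LinearMap.add_apply, key n]
    rw [this]; ring
end
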